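/- Let r and n be positive integers and let Q be the Adin–Roichman order. Let γ = (π(1)^{c_1},…,π(n)^{c_n}) ∈ G(r,n), let μ ∈ P_n be γ-compatible and let λ ∈ P_n be γ^{-1}-compatible (both with respect to Q). Define g = λ and define f by declaring the π(i)-th entry of f to be μ_i carrying color c_i (for i = 1,…,n). Then f ∈ N_0^{r,n} (in particular every zero entry of f has color 0) and [g; f] ∈ B(r,n). -/

import Mathlib

open scoped Classical

abbrev CI : Type := ℕ × ℕ

/-- Membership in the set `C(r,n)` of colored integers. -/
def memC (r n : ℕ) (x : CI) : Prop :=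
  x.1 ≤ n ∧ x.2 < r ∧ (x.1 = 0 → x.2 = 0)

/-- A positive-dominant (strict) total order on the colored integers `C(r,n)`. -/
structure PDOrder (r n : ℕ) where
  lt : CI → CI → Prop
  irrefl : ∀ x, memC r n x → ¬lt x x
  trans : ∀ x y z, memC r n x → memC r n y → memC r n z → lt x y → lt y z → lt x z
  trichotomy : ∀ x y, memC r n x → memC r n y → x = y ∨ lt x y ∨ lt y x
  nat_mono : ∀ i j : ℕ, i ≤ n → j ≤ n → i < j → lt (i, 0) (j, 0)
  pos_dom : ∀ i j c : ℕ, i ≤ n → 1 ≤ j → j ≤ n → 1 ≤ c → c < r → lt (j, c) (i, 0)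

/-- A colored permutation in `G(r,n) = Z_r ≀ S_n`. -/
structure ColoredPerm (r n : ℕ) where
  perm : Equiv.Perm (Fin n)
  color : Fin n → Fin r

/-- The colored entry `π(i)^{c_i}` (values are taken in `[1,n]`). -/
def cval {r n : ℕ} (γ : ColoredPerm r n) (i : Fin n) : CI :=
  ((γ.perm i : ℕ) + 1, (γ.color i : ℕ))

/-- Entry `γ(j)` for `j ∈ {0,…,n}`, with the convention `γ(0) = 0`. -/
def centry {r n : ℕ} (γ : ColoredPerm r n) (j : ℕ) : CI :=
  if h : 1 ≤ j ∧ j ≤ n then cval γ ⟨j - 1, by omega⟩ else (0, 0)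

/-- Descent set `Des(γ) ⊆ {0,…,n-1}` with respect to the relation `lt`. -/
noncomputable def DesSet {r n : ℕ} (lt : CI → CI → Prop) (γ : ColoredPerm r n) : Finset ℕ :=
  (Finset.range n).filter fun j => lt (centry γ (j + 1)) (centry γ j)

noncomputable def desStat {r n : ℕ} (lt : CI → CI → Prop) (γ : ColoredPerm r n) : ℕ :=
  (DesSet lt γ).card

noncomputable def majStat {r n : ℕ} (lt : CI → CI → Prop) (γ : ColoredPerm r n) : ℕ :=
  ∑ j ∈ DesSet lt γ, j

noncomputable def invStat {r n : ℕ} (lt : CI → CI → Prop) (γ : ColoredPerm r n) : ℕ :=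
  ((Finset.univ : Finset (Fin n × Fin n)).filter fun p =>
    p.1 < p.2 ∧ lt (cval γ p.2) (cval γ p.1)).card

noncomputable def lenStat {r n : ℕ} (lt : CI → CI → Prop) (γ : ColoredPerm r n) : ℕ :=
  invStat lt γ +
    ∑ i ∈ Finset.univ.filter (fun i => 0 < (γ.color i : ℕ)),
      ((γ.perm i : ℕ) + 1 + (γ.color i : ℕ) - 1)

def colStat {r n : ℕ} (γ : ColoredPerm r n) : ℕ := ∑ i, (γ.color i : ℕ)

/-- The inverse colored permutation `γ⁻¹`. -/
def cinv {r n : ℕ} (γ : ColoredPerm r n) : ColoredPerm r n :=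
  ⟨γ.perm⁻¹, fun i => γ.color (γ.perm⁻¹ i)⟩

/-- An element of `N_0^{r,n}`: a sequence of colored nonnegative integers. -/
structure ColoredSeq (r n : ℕ) where
  val : Fin n → ℕ
  col : Fin n → ℕ
  col_lt : ∀ i, col i < r
  zero_col : ∀ i, val i = 0 → col i = 0

/-- `γ` is the colored permutation `γ_O(f)` obtained by sorting the colored positions
`i^{cf_i}` by increasing value `f_i`, ties broken by increasing `lt`-order. -/
def isSorted {r n : ℕ} (lt : CI → CI → Prop) (f : ColoredSeq r n) (γ : ColoredPerm r n) : Prop :=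
  (∀ i, (γ.color i : ℕ) = f.col (γ.perm i)) ∧
    ∀ i j : Fin n, i < j →
      f.val (γ.perm i) < f.val (γ.perm j) ∨
        (f.val (γ.perm i) = f.val (γ.perm j) ∧ lt (cval γ i) (cval γ j))

def maxf {r n : ℕ} (f : ColoredSeq r n) : ℕ := Finset.univ.sup f.val
def sumf {r n : ℕ} (f : ColoredSeq r n) : ℕ := ∑ i, f.val i
def colf {r n : ℕ} (f : ColoredSeq r n) : ℕ := ∑ i, f.col i

/-- The Adin–Roichman order on colored nonnegative integers:
`i^c <_Q j^d` iff `c > d`, or `c = d` and `i < j`. -/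
def ARlt (x y : ℕ × ℕ) : Prop := y.2 < x.2 ∨ (x.2 = y.2 ∧ x.1 < y.1)

def ARle (x y : ℕ × ℕ) : Prop := x = y ∨ ARlt x y

/-- `nthEntry n g j` is `g_j` for `j ∈ [1,n]` (1-based), with the convention `g_0 = 0`. -/
def nthEntry (n : ℕ) (g : Fin n → ℕ) (j : ℕ) : ℕ :=
  if h : 1 ≤ j ∧ j ≤ n then g ⟨j - 1, by omega⟩ else 0

/-- The defining condition of the set `B(r,n)` of colored bipartite partitions. -/
def memB {r n : ℕ} (g : Fin n → ℕ) (f : ColoredSeq r n) : Prop :=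
  Monotone g ∧
  ∀ (i : ℕ) (h : i + 1 < n),
    g ⟨i, by omega⟩ < g ⟨i + 1, h⟩ ∨
      (g ⟨i, by omega⟩ = g ⟨i + 1, h⟩ ∧
        ARle (f.val ⟨i, by omega⟩, f.col ⟨i, by omega⟩)
          (f.val ⟨i + 1, h⟩, f.col ⟨i + 1, h⟩))


lemma centry_eq {r n : ℕ} (γ : ColoredPerm r n) (j : ℕ) (h1 : 1 ≤ j) (h2 : j ≤ n) :
    centry γ j = cval γ ⟨j - 1, by omega⟩ := dif_pos ⟨h1, h2⟩

lemma centry_zero {r n : ℕ} (γ : ColoredPerm r n) : centry γ 0 = (0, 0) := by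
  simp [centry]

lemma mem_DesSet_iff {r n : ℕ} (lt : CI → CI → Prop) (γ : ColoredPerm r n) (j : ℕ) :
    j ∈ DesSet lt γ ↔ j < n ∧ lt (centry γ (j + 1)) (centry γ j) := by
  simp [DesSet]

lemma nthEntry_eq {n : ℕ} (g : Fin n → ℕ) (j : ℕ) (h1 : 1 ≤ j) (h2 : j ≤ n) :
    nthEntry n g j = g ⟨j - 1, by omega⟩ := dif_pos ⟨h1, h2⟩

lemma nthEntry_zero {n : ℕ} (g : Fin n → ℕ) : nthEntry n g 0 = 0 := by
  simp [nthEntry]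

-- Statement 10
set_option maxHeartbeats 2000000 in
theorem stmt10 (r n : ℕ) (hr : 0 < r) (hn : 0 < n) (γ : ColoredPerm r n)
    (mu lam : Fin n → ℕ) (hmu : Monotone mu) (hlam : Monotone lam)
    (hmuc : ∀ j ∈ DesSet ARlt γ, nthEntry n mu j < nthEntry n mu (j + 1))
    (hlamc : ∀ j ∈ DesSet ARlt (cinv γ), nthEntry n lam j < nthEntry n lam (j + 1))
    (fv fc : Fin n → ℕ)
    (hfv : ∀ i : Fin n, fv (γ.perm i) = mu i)
    (hfc : ∀ i : Fin n, fc (γ.perm i) = (γ.color i : ℕ)) :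
    (∀ j, fc j < r) ∧ (∀ j, fv j = 0 → fc j = 0) ∧
    Monotone lam ∧
    (∀ (i : ℕ) (h : i + 1 < n),
      lam ⟨i, by omega⟩ < lam ⟨i + 1, h⟩ ∨
        (lam ⟨i, by omega⟩ = lam ⟨i + 1, h⟩ ∧
          ARle (fv ⟨i, by omega⟩, fc ⟨i, by omega⟩)
            (fv ⟨i + 1, h⟩, fc ⟨i + 1, h⟩))) := by
    -- Key: positive color implies positive mu
  have key : ∀ m : ℕ, ∀ k : Fin n, (k : ℕ) = m → 0 < (γ.color k : ℕ) → 0 < mu k := by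
    intro m
    induction m using Nat.strong_induction_on with
    | _ m ih =>
      intro k hk hc
      by_cases h0 : (k : ℕ) = 0
      · have hdes : 0 ∈ DesSet ARlt γ := by
          rw [mem_DesSet_iff]
          refine ⟨hn, ?_⟩
          rw [centry_zero, centry_eq γ 1 le_rfl hn]
          have hk0 : (⟨1 - 1, by omega⟩ : Fin n) = k := by
            apply Fin.ext; simp only [Fin.val_mk]; omega
          rw [hk0]
          exact Or.inl hc
        have := hmuc 0 hdes
        rw [nthEntry_zero, nthEntry_eq mu 1 le_rfl hn] at this
        have hk0 : (⟨1 - 1, by omega⟩ : Fin n) = k := by apply Fin.ext; simp only [Fin.val_mk]; omega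
        rw [hk0] at this
        exact this
      · have hkpos : 0 < (k : ℕ) := Nat.pos_of_ne_zero h0
        have hklt : (k : ℕ) < n := k.isLt
        set k' : Fin n := ⟨(k : ℕ) - 1, by omega⟩ with hk'
        by_cases hcc : (γ.color k' : ℕ) < (γ.color k : ℕ)
        · -- descent at (k : ℕ)
          have hdes : (k : ℕ) ∈ DesSet ARlt γ := by
            rw [mem_DesSet_iff]
            refine ⟨hklt, ?_⟩
            rw [centry_eq γ ((k : ℕ) + 1) (by omega) (by omega),
                centry_eq γ (k : ℕ) (by omega) (by omega)]
            have e1 : (⟨(k : ℕ) + 1 - 1, by omega⟩ : Fin n) = k := by apply Fin.ext; simp only [Fin.val_mk]; omega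
            rw [e1]
            exact Or.inl hcc
          have := hmuc (k : ℕ) hdes
          rw [nthEntry_eq mu ((k : ℕ) + 1) (by omega) (by omega),
              nthEntry_eq mu (k : ℕ) (by omega) (by omega)] at this
          have e1 : (⟨(k : ℕ) + 1 - 1, by omega⟩ : Fin n) = k := by apply Fin.ext; simp only [Fin.val_mk]; omega
          rw [e1] at this
          omega
        · have hc' : 0 < (γ.color k' : ℕ) := by omega
          have hmuk' : 0 < mu k' := ih ((k : ℕ) - 1) (by omega) k' rfl hc'
          have : mu k' ≤ mu k := hmu (by rw [Fin.le_def, hk']; simp only [Fin.val_mk]; omega)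
          omega
  refine ⟨?_, ?_, hlam, ?_⟩
  · intro j
    have : fc (γ.perm (γ.perm⁻¹ j)) = (γ.color (γ.perm⁻¹ j) : ℕ) := hfc _
    rw [show γ.perm (γ.perm⁻¹ j) = j from γ.perm.apply_symm_apply j] at this
    rw [this]
    exact (γ.color _).isLt
  · intro j hj
    have h1 : fv (γ.perm (γ.perm⁻¹ j)) = mu (γ.perm⁻¹ j) := hfv _
    have h2 : fc (γ.perm (γ.perm⁻¹ j)) = (γ.color (γ.perm⁻¹ j) : ℕ) := hfc _
    rw [show γ.perm (γ.perm⁻¹ j) = j from γ.perm.apply_symm_apply j] at h1 h2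
    rw [h2]
    by_contra hne
    have hcpos : 0 < (γ.color (γ.perm⁻¹ j) : ℕ) := Nat.pos_of_ne_zero hne
    have := key _ (γ.perm⁻¹ j) rfl hcpos
    omega
  · intro i h
    rcases lt_or_eq_of_le (hlam (show (⟨i, by omega⟩ : Fin n) ≤ ⟨i + 1, h⟩ by
        simp [Fin.le_def])) with hlt | heq
    · exact Or.inl hlt
    · refine Or.inr ⟨heq, ?_⟩
      -- i + 1 is not a descent of cinv γ
      have hnd : (i + 1) ∉ DesSet ARlt (cinv γ) := by
        intro hmem
        have := hlamc (i + 1) hmem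
        rw [nthEntry_eq lam (i + 1) (by omega) (by omega),
            nthEntry_eq lam (i + 2) (by omega) (by omega)] at this
        have this2 : lam ⟨i, by omega⟩ < lam ⟨i + 1, h⟩ := this
        omega
      rw [mem_DesSet_iff] at hnd
      push_neg at hnd
      have hlt2 := hnd (by omega)
      rw [centry_eq _ (i + 2) (by omega) (by omega),
          centry_eq _ (i + 1) (by omega) (by omega)] at hlt2
      have e1 : (⟨i + 1 - 1, by omega⟩ : Fin n) = ⟨i, by omega⟩ := by apply Fin.ext; simp only [Fin.val_mk]; omega
      have e2 : (⟨i + 2 - 1, by omega⟩ : Fin n) = ⟨i + 1, h⟩ := by apply Fin.ext; simp only [Fin.val_mk]; omega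
      rw [e1, e2] at hlt2
      obtain ⟨a, ha⟩ : ∃ a : Fin n, γ.perm a = ⟨i, by omega⟩ :=
        ⟨γ.perm⁻¹ ⟨i, by omega⟩, Equiv.apply_symm_apply γ.perm _⟩
      obtain ⟨b, hb⟩ : ∃ b : Fin n, γ.perm b = ⟨i + 1, h⟩ :=
        ⟨γ.perm⁻¹ ⟨i + 1, h⟩, Equiv.apply_symm_apply γ.perm _⟩
      have hab : (a : ℕ) ≠ (b : ℕ) := by
        intro hh
        have h4 : (⟨i, by omega⟩ : Fin n) = ⟨i + 1, h⟩ :=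
          ha.symm.trans ((congrArg γ.perm (Fin.ext hh)).trans hb)
        have h5 := congrArg Fin.val h4
        simp only [Fin.val_mk] at h5
        omega
      have ha' : γ.perm⁻¹ ⟨i, by omega⟩ = a :=
        (congrArg (fun x => γ.perm⁻¹ x) ha).symm.trans (Equiv.symm_apply_apply γ.perm _)
      have hb' : γ.perm⁻¹ ⟨i + 1, h⟩ = b :=
        (congrArg (fun x => γ.perm⁻¹ x) hb).symm.trans (Equiv.symm_apply_apply γ.perm _)
      have e3 : (γ.color (γ.perm⁻¹ ⟨i, by omega⟩) : ℕ) = (γ.color a : ℕ) :=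
        congrArg (fun x => (γ.color x : ℕ)) ha'
      have e4 : (γ.color (γ.perm⁻¹ ⟨i + 1, h⟩) : ℕ) = (γ.color b : ℕ) :=
        congrArg (fun x => (γ.color x : ℕ)) hb'
      have e5 : ((γ.perm⁻¹ ⟨i, by omega⟩ : Fin n) : ℕ) = (a : ℕ) := congrArg Fin.val ha'
      have e6 : ((γ.perm⁻¹ ⟨i + 1, h⟩ : Fin n) : ℕ) = (b : ℕ) := congrArg Fin.val hb'
      have hlt3 :
          ¬ (((γ.color (γ.perm⁻¹ ⟨i, by omega⟩) : ℕ) < (γ.color (γ.perm⁻¹ ⟨i + 1, h⟩) : ℕ)) ∨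
            ((γ.color (γ.perm⁻¹ ⟨i + 1, h⟩) : ℕ) = (γ.color (γ.perm⁻¹ ⟨i, by omega⟩) : ℕ) ∧
              ((γ.perm⁻¹ ⟨i + 1, h⟩ : Fin n) : ℕ) + 1 <
                ((γ.perm⁻¹ ⟨i, by omega⟩ : Fin n) : ℕ) + 1)) := hlt2
      have hfa1 : fv ⟨i, by omega⟩ = mu a := (congrArg fv ha.symm).trans (hfv a)
      have hfa2 : fc ⟨i, by omega⟩ = (γ.color a : ℕ) := (congrArg fc ha.symm).trans (hfc a)
      have hfb1 : fv ⟨i + 1, h⟩ = mu b := (congrArg fv hb.symm).trans (hfv b)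
      have hfb2 : fc ⟨i + 1, h⟩ = (γ.color b : ℕ) := (congrArg fc hb.symm).trans (hfc b)
      rw [hfa1, hfa2, hfb1, hfb2]
      unfold ARle ARlt
      by_cases hcab : (γ.color a : ℕ) = (γ.color b : ℕ)
      · have hord : (a : ℕ) < (b : ℕ) := by omega
        have hmab : mu a ≤ mu b := hmu (by rw [Fin.le_def]; omega)
        rcases lt_or_eq_of_le hmab with hh | hh
        · exact Or.inr (Or.inr ⟨hcab, hh⟩)
        · exact Or.inl (by rw [hh, hcab])
      · exact Or.inr (Or.inl (show (γ.color b : ℕ) < (γ.color a : ℕ) by omega))
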